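/- arXiv:0812.1726 — 2 statements merged into one kernel-verified Lean document; each statement's English description precedes it below -/
import Mathlib

section
/- Let (τ_k)_{k≥0} be an increasing sequence of stopping times and (δ_k)_{k≥1} positive reals with Σ_k δ_k = ∞. Suppose that for every k ≥ 1, P(τ_k − τ_{k−1} ≥ δ_k | F_{τ_{k−1}}) ≥ 1/4 almost surely on {τ_{k−1} < ∞}. Then Σ_{k=1}^∞ (τ_k − τ_{k−1}) = ∞ almost surely on the event {τ_k < ∞ for all k}. -/
open MeasureTheory Filter
open scoped ENNReal

private lemma min_sum_div (δ : ℕ → ℝ) (hδpos : ∀ k, 1 ≤ k → 0 < δ k)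
    (hδdiv : Tendsto (fun n => ∑ k ∈ Finset.Icc 1 n, δ k) atTop atTop) :
    Tendsto (fun n => ∑ k ∈ Finset.Icc 1 n, min (δ k) 1) atTop atTop := by
  have hnn : ∀ k, 1 ≤ k → 0 ≤ min (δ k) 1 := fun k hk => le_min (hδpos k hk).le zero_le_one
  by_cases h : {k : ℕ | 1 ≤ k ∧ 1 ≤ δ k}.Infinite
  · rw [tendsto_atTop_atTop]
    intro b
    obtain ⟨F, hFsub, hFcard⟩ := h.exists_subset_card_eq ⌈b⌉₊
    refine ⟨F.sup id, fun n hn => ?_⟩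
    have hFsub' : F ⊆ Finset.Icc 1 n := fun k hk =>
      Finset.mem_Icc.2 ⟨(hFsub hk).1, le_trans (Finset.le_sup (f := id) hk) hn⟩
    calc b ≤ (⌈b⌉₊ : ℝ) := Nat.le_ceil b
    _ = ∑ k ∈ F, min (δ k) 1 := by
        rw [← hFcard, Finset.card_eq_sum_ones]
        push_cast
        exact Finset.sum_congr rfl fun k hk => (min_eq_right (hFsub hk).2).symm
    _ ≤ ∑ k ∈ Finset.Icc 1 n, min (δ k) 1 :=
        Finset.sum_le_sum_of_subset_of_nonneg hFsub'
          (fun k hk _ => hnn k (Finset.mem_Icc.1 hk).1)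
  · rw [Set.not_infinite] at h
    obtain ⟨N, hN⟩ := h.bddAbove
    have hsmall : ∀ k, N < k → δ k ≤ 1 := by
      intro k hk
      by_contra hgt
      exact absurd (hN ⟨Nat.one_le_iff_ne_zero.2 (by omega), (not_le.1 hgt).le⟩) (by omega)
    have key : ∀ n, N ≤ n →
        (∑ k ∈ Finset.Icc 1 n, δ k) - (∑ k ∈ Finset.Icc 1 N, δ k)
          ≤ ∑ k ∈ Finset.Icc 1 n, min (δ k) 1 := by
      intro n hn
      have hsplit : (∑ k ∈ Finset.Icc 1 N, δ k) + (∑ k ∈ Finset.Ioc N n, δ k)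
          = ∑ k ∈ Finset.Icc 1 n, δ k := by
        have hdisj : Disjoint (Finset.Ioc 0 N) (Finset.Ioc N n) := by
          rw [Finset.disjoint_left]
          intro k hk hk'
          rw [Finset.mem_Ioc] at hk hk'
          omega
        rw [show Finset.Icc 1 N = Finset.Ioc 0 N from Finset.Icc_add_one_left_eq_Ioc 0 N, show Finset.Icc 1 n = Finset.Ioc 0 n from Finset.Icc_add_one_left_eq_Ioc 0 n, ← Finset.sum_union hdisj,
          Finset.Ioc_union_Ioc_eq_Ioc (Nat.zero_le N) hn]
      rw [sub_le_iff_le_add, ← hsplit, add_comm, add_le_add_iff_right]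
      calc (∑ k ∈ Finset.Ioc N n, δ k) = ∑ k ∈ Finset.Ioc N n, min (δ k) 1 :=
            Finset.sum_congr rfl fun k hk =>
              (min_eq_left (hsmall k (Finset.mem_Ioc.1 hk).1)).symm
      _ ≤ ∑ k ∈ Finset.Icc 1 n, min (δ k) 1 :=
            Finset.sum_le_sum_of_subset_of_nonneg
              (fun k hk => Finset.mem_Icc.2 ⟨Nat.one_le_iff_ne_zero.2 (Nat.pos_of_ne_zero (by have := (Finset.mem_Ioc.1 hk).1; omega)).ne', (Finset.mem_Ioc.1 hk).2⟩)
              (fun k hk _ => hnn k (Finset.mem_Icc.1 hk).1)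
    refine tendsto_atTop_mono' atTop ?_ (tendsto_atTop_add_const_right _
      (-(∑ k ∈ Finset.Icc 1 N, δ k)) hδdiv)
    filter_upwards [eventually_ge_atTop N] with n hn
    simpa [sub_eq_add_neg] using key n hn

/-- Let `(τ_k)_{k ≥ 0}` be an increasing sequence of (possibly infinite)
stopping times and `(δ_k)_{k ≥ 1}` positive reals with `Σ δ_k = ∞`. If for every `k ≥ 1`,
`P(τ_k - τ_{k-1} ≥ δ_k | F_{τ_{k-1}}) ≥ 1/4` a.s. on `{τ_{k-1} < ∞}`, then
`Σ_k (τ_k - τ_{k-1}) = ∞` a.s. on `{τ_k < ∞ for all k}`. -/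
theorem stmt4 {Ω : Type} {m0 : MeasurableSpace Ω} (μ : Measure Ω) [IsProbabilityMeasure μ]
    (ℱ : Filtration ℝ m0) (τ : ℕ → Ω → ℝ≥0∞)
    (hτmeas : ∀ n, ∀ t : ℝ, MeasurableSet[ℱ t] {ω | τ n ω ≤ ENNReal.ofReal t})
    (hτmono : ∀ ω, Monotone fun n => τ n ω)
    (δ : ℕ → ℝ) (hδpos : ∀ k, 1 ≤ k → 0 < δ k)
    (hδdiv : Tendsto (fun n => ∑ k ∈ Finset.Icc 1 n, δ k) atTop atTop)
    -- `𝔾 k` is the stopped σ-algebra `F_{τ_k}`: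
    (𝔾 : ℕ → MeasurableSpace Ω) (h𝔾le : ∀ k, 𝔾 k ≤ m0)
    (h𝔾 : ∀ k, ∀ A : Set Ω, MeasurableSet[𝔾 k] A ↔
      (MeasurableSet A ∧ ∀ t : ℝ, MeasurableSet[ℱ t] (A ∩ {ω | τ k ω ≤ ENNReal.ofReal t})))
    (hcond : ∀ k : ℕ, 1 ≤ k → ∀ᵐ ω ∂μ, τ (k-1) ω < ⊤ →
      (1/4 : ℝ) ≤ (μ[(Set.indicator
        {ω' | ENNReal.ofReal (δ k) ≤ τ k ω' - τ (k-1) ω'} (fun _ => (1:ℝ))) | 𝔾 (k-1)]) ω) :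
    ∀ᵐ ω ∂μ, (∀ k, τ k ω < ⊤) → ∑' k : ℕ, (τ (k+1) ω - τ k ω) = ⊤ := by
  -- measurability of each `τ n`
  have hm : ∀ n, Measurable (τ n) := by
    intro n
    apply measurable_of_Iic
    intro x
    rcases eq_or_ne x ⊤ with rfl | hx
    · simpa using MeasurableSet.univ
    · have : τ n ⁻¹' Set.Iic x = {ω | τ n ω ≤ ENNReal.ofReal x.toReal} := by
        ext ω; simp [ENNReal.ofReal_toReal hx]
      rw [this]
      exact ℱ.le _ _ (hτmeas n x.toReal)
  -- the `𝔾` are a filtration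
  have h𝔾mono : Monotone 𝔾 := by
    intro j k hjk A hA
    rw [h𝔾] at hA ⊢
    refine ⟨hA.1, fun t => ?_⟩
    have heq : A ∩ {ω | τ k ω ≤ ENNReal.ofReal t}
        = (A ∩ {ω | τ j ω ≤ ENNReal.ofReal t}) ∩ {ω | τ k ω ≤ ENNReal.ofReal t} := by
      ext ω
      constructor
      · rintro ⟨h1, h2⟩; exact ⟨⟨h1, le_trans (hτmono ω hjk) h2⟩, h2⟩
      · rintro ⟨⟨h1, _⟩, h2⟩; exact ⟨h1, h2⟩
    rw [heq]
    exact (hA.2 t).inter (hτmeas k t)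
  set 𝒢 : Filtration ℕ m0 := ⟨𝔾, h𝔾mono, h𝔾le⟩ with h𝒢
  -- the events
  set s : ℕ → Set Ω := fun k => {ω | ENNReal.ofReal (δ k) ≤ τ k ω - τ (k-1) ω} with hs_def
  have hs : ∀ k, 1 ≤ k → MeasurableSet[𝔾 k] (s k) := by
    intro k hk
    rw [h𝔾]
    have hc : (0:ℝ) < δ k := hδpos k hk
    constructor
    · exact measurableSet_le measurable_const ((hm k).sub (hm (k-1)))
    · intro t
      set c : ℝ≥0∞ := ENNReal.ofReal (δ k) with hc_def
      have hkey : s k ∩ {ω | τ k ω ≤ ENNReal.ofReal t}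
          = (⋂ (q : ℚ), ({ω | τ k ω ≤ ENNReal.ofReal (min (q:ℝ) t)}ᶜ
              ∪ {ω | τ (k-1) ω + c ≤ ENNReal.ofReal (min (q:ℝ) t)}))
            ∩ {ω | τ k ω ≤ ENNReal.ofReal t} := by
        ext ω
        simp only [Set.mem_inter_iff, Set.mem_iInter, Set.mem_union, Set.mem_compl_iff,
          Set.mem_setOf_eq, hs_def]
        constructor
        · rintro ⟨h1, h2⟩
          have hτle : τ (k-1) ω ≤ τ k ω := hτmono ω (Nat.sub_le k 1)
          have hτne : τ (k-1) ω ≠ ⊤ :=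
            (lt_of_le_of_lt (hτle.trans h2) ENNReal.ofReal_lt_top).ne
          have h3 : τ (k-1) ω + c ≤ τ k ω :=
            ((ENNReal.cancel_of_ne hτne).le_tsub_iff_left hτle).1 h1
          refine ⟨fun q => ?_, h2⟩
          by_cases hq : τ k ω ≤ ENNReal.ofReal (min (q:ℝ) t)
          · exact Or.inr (h3.trans hq)
          · exact Or.inl hq
        · rintro ⟨h1, h2⟩
          refine ⟨?_, h2⟩
          have hτle : τ (k-1) ω ≤ τ k ω := hτmono ω (Nat.sub_le k 1)
          have hτktne : τ k ω ≠ ⊤ := (lt_of_le_of_lt h2 ENNReal.ofReal_lt_top).ne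
          have hτne : τ (k-1) ω ≠ ⊤ :=
            (lt_of_le_of_lt hτle (lt_of_le_of_lt h2 ENNReal.ofReal_lt_top)).ne
          rw [(ENNReal.cancel_of_ne hτne).le_tsub_iff_left hτle]
          by_contra hlt
          rw [not_le] at hlt
          by_cases hcase : τ (k-1) ω + c ≤ ENNReal.ofReal t
          · have hyne : τ (k-1) ω + c ≠ ⊤ :=
              (lt_of_le_of_lt hcase ENNReal.ofReal_lt_top).ne
            have htR : (τ k ω).toReal < (τ (k-1) ω + c).toReal :=
              (ENNReal.toReal_lt_toReal hτktne hyne).2 hlt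
            obtain ⟨q, hq1, hq2⟩ := exists_rat_btwn htR
            have hq0 : (0:ℝ) ≤ q := le_of_lt (lt_of_le_of_lt ENNReal.toReal_nonneg hq1)
            have ht0 : (0:ℝ) < t := by
              by_contra ht0
              push_neg at ht0
              have h4 : c ≤ ENNReal.ofReal t := le_trans le_add_self hcase
              rw [show ENNReal.ofReal t = 0 from ENNReal.ofReal_eq_zero.2 ht0,
                nonpos_iff_eq_zero, hc_def, ENNReal.ofReal_eq_zero] at h4
              exact absurd h4 (not_le.2 hc)
            have hyt : (τ (k-1) ω + c).toReal ≤ t := by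
              have h5 := ENNReal.toReal_mono ENNReal.ofReal_ne_top hcase
              rwa [ENNReal.toReal_ofReal ht0.le] at h5
            have hqt : min ((q:ℝ)) t = (q:ℝ) := min_eq_left (le_of_lt (lt_of_lt_of_le hq2 hyt))
            rcases h1 q with h6 | h6
            · rw [hqt] at h6
              exact h6 ((ENNReal.le_ofReal_iff_toReal_le hτktne hq0).2 hq1.le)
            · rw [hqt] at h6
              have h7 := ENNReal.toReal_mono ENNReal.ofReal_ne_top h6
              rw [ENNReal.toReal_ofReal hq0] at h7
              exact absurd h7 (not_le.2 hq2)
          · obtain ⟨q, hq⟩ := exists_rat_gt t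
            have hqt : min ((q:ℝ)) t = t := min_eq_right hq.le
            rcases h1 q with h6 | h6
            · rw [hqt] at h6; exact h6 h2
            · rw [hqt] at h6; exact hcase h6
      rw [hkey]
      refine MeasurableSet.inter (MeasurableSet.iInter fun q => ?_) (hτmeas k t)
      refine MeasurableSet.union
        ((ℱ.mono (min_le_right (q:ℝ) t) _ (hτmeas k (min (q:ℝ) t))).compl) ?_
      by_cases hδm : δ k ≤ min ((q:ℝ)) t
      · have hsub : {ω | τ (k-1) ω + c ≤ ENNReal.ofReal (min ((q:ℝ)) t)}
            = {ω | τ (k-1) ω ≤ ENNReal.ofReal (min ((q:ℝ)) t - δ k)} := by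
          ext ω
          simp only [Set.mem_setOf_eq]
          rw [ENNReal.ofReal_sub _ hc.le, ← hc_def,
            (ENNReal.cancel_of_ne ENNReal.ofReal_ne_top).le_tsub_iff_left
              (ENNReal.ofReal_le_ofReal hδm), add_comm]
        rw [hsub]
        exact ℱ.mono (by linarith [min_le_right (q:ℝ) t]) _ (hτmeas (k-1) _)
      · have hsub : {ω | τ (k-1) ω + c ≤ ENNReal.ofReal (min ((q:ℝ)) t)} = ∅ := by
          ext ω
          simp only [Set.mem_setOf_eq, Set.mem_empty_iff_false, iff_false, not_le]
          calc ENNReal.ofReal (min ((q:ℝ)) t) < c :=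
                (ENNReal.ofReal_lt_ofReal_iff hc).2 (not_le.1 hδm)
          _ ≤ τ (k-1) ω + c := le_add_self
        rw [hsub]
        exact @MeasurableSet.empty _ (ℱ t)
  -- the truncated weights
  classical
  set c' : ℕ → ℝ := fun k => min (δ k) 1 with hc'_def
  have hc'nn : ∀ k, 0 ≤ c' (k+1) :=
    fun k => le_min (hδpos (k+1) (Nat.le_add_left 1 k)).le zero_le_one
  have hc'le : ∀ k, c' (k+1) ≤ 1 := fun k => min_le_right _ _
  have hindnn : ∀ k (ω : Ω), 0 ≤ (s k).indicator (fun _ => (1:ℝ)) ω :=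
    fun k ω => Set.indicator_nonneg (fun _ _ => zero_le_one) ω
  have hindle : ∀ k (ω : Ω), (s k).indicator (fun _ => (1:ℝ)) ω ≤ 1 :=
    fun k ω => Set.indicator_le' (fun _ _ => le_refl 1) (fun _ _ => zero_le_one) ω
  -- the process
  set f : ℕ → Ω → ℝ :=
    fun n => ∑ k ∈ Finset.range n, c' (k+1) • (s (k+1)).indicator (fun _ => (1:ℝ))
    with hf_def
  have hfsucc : ∀ n, f (n+1) = f n + c' (n+1) • (s (n+1)).indicator (fun _ => (1:ℝ)) := by
    intro n
    rw [hf_def]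
    exact Finset.sum_range_succ _ n
  have hfdiff : ∀ n (ω : Ω),
      f (n+1) ω - f n ω = c' (n+1) * (s (n+1)).indicator (fun _ => (1:ℝ)) ω := by
    intro n ω
    rw [hfsucc n]
    simp [smul_eq_mul]
  have hadapted : StronglyAdapted 𝒢 f := by
    intro n
    refine Finset.stronglyMeasurable_sum _ fun k hk => ?_
    have hk' : k + 1 ≤ n := Finset.mem_range.1 hk
    exact (stronglyMeasurable_const.indicator
      (𝒢.mono hk' _ (hs (k+1) (Nat.le_add_left 1 k)))).const_smul _
  have hint : ∀ n, Integrable (f n) μ := by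
    intro n
    refine integrable_finset_sum' _ fun k _ => ?_
    exact (IntegrableOn.integrable_indicator (integrable_const (1:ℝ))
      (h𝔾le (k+1) _ (hs (k+1) (Nat.le_add_left 1 k)))).smul _
  have hfmono : ∀ᵐ ω ∂μ, ∀ n, f n ω ≤ f (n+1) ω := by
    refine Eventually.of_forall fun ω n => ?_
    have := hfdiff n ω
    nlinarith [mul_nonneg (hc'nn n) (hindnn (n+1) ω)]
  have hbdd : ∀ᵐ ω ∂μ, ∀ n, |f (n+1) ω - f n ω| ≤ ((1:NNReal) : ℝ) := by
    refine Eventually.of_forall fun ω n => ?_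
    rw [hfdiff n ω, abs_of_nonneg (mul_nonneg (hc'nn n) (hindnn (n+1) ω))]
    push_cast
    calc c' (n+1) * (s (n+1)).indicator (fun _ => (1:ℝ)) ω
        ≤ 1 * 1 := mul_le_mul (hc'le n) (hindle (n+1) ω) (hindnn (n+1) ω) zero_le_one
    _ = 1 := one_mul 1
  have hBC := tendsto_sum_indicator_atTop_iff (μ := μ) (ℱ := 𝒢) hfmono hadapted hint hbdd
  have hcond' : ∀ᵐ ω ∂μ, ∀ k,
      (τ k ω < ⊤ → (1/4:ℝ) ≤ (μ[(s (k+1)).indicator (fun _ => (1:ℝ))|𝔾 k]) ω) ∧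
      (μ[f (k+1) - f k|𝒢 k]) ω
        = c' (k+1) * (μ[(s (k+1)).indicator (fun _ => (1:ℝ))|𝔾 k]) ω := by
    rw [ae_all_iff]
    intro k
    have h1 := hcond (k+1) (Nat.le_add_left 1 k)
    have h2 : (μ[f (k+1) - f k|𝒢 k]) =ᵐ[μ]
        fun ω => c' (k+1) * (μ[(s (k+1)).indicator (fun _ => (1:ℝ))|𝔾 k]) ω := by
      have hfd : f (k+1) - f k = c' (k+1) • (s (k+1)).indicator (fun _ => (1:ℝ)) := by
        rw [hfsucc k]; ring
      rw [hfd]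
      refine (condExp_smul _ _ _).trans (Eventually.of_forall fun ω => ?_)
      simp [smul_eq_mul]; exact Or.inl rfl
    filter_upwards [h1, h2] with ω hω1 hω2
    exact ⟨fun hτ => hω1 hτ, hω2⟩
  have hsum := min_sum_div δ hδpos hδdiv
  filter_upwards [hBC, hcond'] with ω hω1 hω2
  intro hfin
  -- the predictable part diverges
  have hreindex : ∀ n, ∑ k ∈ Finset.Icc 1 n, c' k = ∑ k ∈ Finset.range n, c' (k+1) := by
    intro n
    rw [← Finset.Ico_add_one_right_eq_Icc, Finset.sum_Ico_eq_sum_range]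
    simp [add_comm]
  have hpred : Tendsto (fun n => predictablePart f 𝒢 μ n ω) atTop atTop := by
    have hge : ∀ n, (1/4:ℝ) * ∑ k ∈ Finset.Icc 1 n, c' k
        ≤ predictablePart f 𝒢 μ n ω := by
      intro n
      rw [predictablePart, Finset.sum_apply, hreindex n, Finset.mul_sum]
      refine Finset.sum_le_sum fun k _ => ?_
      rw [(hω2 k).2]
      have h14 := (hω2 k).1 (hfin k)
      nlinarith [hc'nn k]
    exact tendsto_atTop_mono hge (hsum.const_mul_atTop (by norm_num))
  have hftop : Tendsto (fun n => f n ω) atTop atTop := hω1.2 hpred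
  -- conclude
  have hterm : ∀ k, ENNReal.ofReal (c' (k+1) * (s (k+1)).indicator (fun _ => (1:ℝ)) ω)
      ≤ τ (k+1) ω - τ k ω := by
    intro k
    by_cases hmem : ω ∈ s (k+1)
    · rw [Set.indicator_of_mem hmem, mul_one]
      exact le_trans (ENNReal.ofReal_le_ofReal (min_le_left _ _)) hmem
    · rw [Set.indicator_of_notMem hmem, mul_zero, ENNReal.ofReal_zero]
      exact zero_le
  have hge : ∀ n, ENNReal.ofReal (f n ω) ≤ ∑' k : ℕ, (τ (k+1) ω - τ k ω) := by
    intro n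
    have h8 : f n ω
        = ∑ k ∈ Finset.range n, c' (k+1) * (s (k+1)).indicator (fun _ => (1:ℝ)) ω := by
      show (∑ k ∈ Finset.range n,
          c' (k+1) • (s (k+1)).indicator (fun _ => (1:ℝ))) ω = _
      rw [Finset.sum_apply]
      simp [smul_eq_mul]
    calc ENNReal.ofReal (f n ω)
        = ∑ k ∈ Finset.range n,
            ENNReal.ofReal (c' (k+1) * (s (k+1)).indicator (fun _ => (1:ℝ)) ω) := by
          rw [h8]
          exact ENNReal.ofReal_sum_of_nonneg
            fun k _ => mul_nonneg (hc'nn k) (hindnn (k+1) ω)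
    _ ≤ ∑ k ∈ Finset.range n, (τ (k+1) ω - τ k ω) :=
          Finset.sum_le_sum fun k _ => hterm k
    _ ≤ ∑' k : ℕ, (τ (k+1) ω - τ k ω) := ENNReal.sum_le_tsum _
  by_contra hne
  set M := ∑' k : ℕ, (τ (k+1) ω - τ k ω) with hM_def
  obtain ⟨n, hn⟩ := (hftop.eventually_ge_atTop (M.toReal + 1)).exists
  have h9 : ENNReal.ofReal (M.toReal + 1) ≤ M :=
    le_trans (ENNReal.ofReal_le_ofReal hn) (hge n)
  have hlt : M < ENNReal.ofReal (M.toReal + 1) := by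
    conv_lhs => rw [← ENNReal.ofReal_toReal hne]
    exact (ENNReal.ofReal_lt_ofReal_iff (by positivity)).2 (lt_add_one _)
  exact absurd h9 (not_le.2 hlt)
end

section
/- Let W be a standard Brownian motion on [0,1] and α ∈ (0,1/2). There exist positive constants k₁, k₂ depending only on α such that P(‖W‖_{α;[0,1]} ≥ u) ≤ k₁ exp(−k₂ u²) for all u ≥ 0, where ‖W‖_{α;[0,1]} = sup_{0≤s<t≤1} |W(t)−W(s)|/(t−s)^α + sup_{0≤t≤1} |W(t)|. -/
open MeasureTheory ProbabilityTheory Filter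

/-- A standard one-dimensional Brownian motion: continuous paths, starts at `0`,
independent Gaussian increments. -/
def IsBrownianMotion {Ω : Type} [MeasurableSpace Ω] (μ : Measure Ω)
    (W : ℝ → Ω → ℝ) : Prop :=
  (∀ ω, Continuous fun t => W t ω) ∧ (∀ ω, W 0 ω = 0) ∧
  (∀ t, Measurable (W t)) ∧
  (∀ s t : ℝ, 0 ≤ s → s ≤ t →
    Measure.map (fun ω => W t ω - W s ω) μ = gaussianReal 0 (Real.toNNReal (t - s))) ∧
  (∀ n : ℕ, ∀ t : ℕ → ℝ, (∀ i, 0 ≤ t i) → Monotone t →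
    iIndepFun
      (fun i : Fin n => fun ω => W (t (i+1)) ω - W (t i) ω) μ)

/-- The Hölder-`α` norm of a path `η` on the interval `[a,b]`. -/
noncomputable def holderNorm (α a b : ℝ) (η : ℝ → ℝ) : ℝ :=
  (⨆ q : {q : ℝ × ℝ // a ≤ q.1 ∧ q.1 < q.2 ∧ q.2 ≤ b},
      |η (q : ℝ × ℝ).2 - η (q : ℝ × ℝ).1| / ((q : ℝ × ℝ).2 - (q : ℝ × ℝ).1) ^ α) +
    ⨆ t : Set.Icc a b, |η (t : ℝ)|


open Real
open scoped NNReal ENNReal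

lemma exp_mul_gaussianPDFReal (v : ℝ≥0) (hv : v ≠ 0) (t x : ℝ) :
    Real.exp (t*x) * gaussianPDFReal 0 v x
      = Real.exp ((v:ℝ)*t^2/2) * gaussianPDFReal ((v:ℝ)*t) v x := by
  have hv' : (0:ℝ) < v := lt_of_le_of_ne v.coe_nonneg (by exact_mod_cast hv.symm)
  simp only [gaussianPDFReal]
  rw [mul_comm (Real.exp (t*x)), mul_assoc, ← Real.exp_add,
    mul_left_comm, ← Real.exp_add]
  congr 2
  field_simp
  ring

lemma integrable_exp_mul_gaussianPDFReal (v : ℝ≥0) (hv : v ≠ 0) (t : ℝ) :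
    Integrable (fun x => Real.exp (t*x) * gaussianPDFReal 0 v x) := by
  have : (fun x => Real.exp (t*x) * gaussianPDFReal 0 v x)
      = fun x => Real.exp ((v:ℝ)*t^2/2) * gaussianPDFReal ((v:ℝ)*t) v x := by
    funext x; exact exp_mul_gaussianPDFReal v hv t x
  rw [this]
  exact (integrable_gaussianPDFReal _ _).const_mul _

lemma integral_exp_mul_gaussianPDFReal (v : ℝ≥0) (hv : v ≠ 0) (t : ℝ) :
    ∫ x, Real.exp (t*x) * gaussianPDFReal 0 v x = Real.exp ((v:ℝ)*t^2/2) := by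
  have : (fun x => Real.exp (t*x) * gaussianPDFReal 0 v x)
      = fun x => Real.exp ((v:ℝ)*t^2/2) * gaussianPDFReal ((v:ℝ)*t) v x := by
    funext x; exact exp_mul_gaussianPDFReal v hv t x
  rw [this, integral_const_mul, integral_gaussianPDFReal_eq_one _ hv, mul_one]

lemma chernoff_gauss (v : ℝ≥0) (hv : v ≠ 0) (t b : ℝ) (S : Set ℝ) (hS : MeasurableSet S)
    (h : ∀ x ∈ S, 1 ≤ Real.exp (t*(x - b))) :
    ∫ x in S, gaussianPDFReal 0 v x ≤ Real.exp (-(t*b) + (v:ℝ)*t^2/2) := by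
  have hint : Integrable (fun x => Real.exp (t*(x-b)) * gaussianPDFReal 0 v x) := by
    have : (fun x => Real.exp (t*(x-b)) * gaussianPDFReal 0 v x)
        = fun x => Real.exp (-(t*b)) * (Real.exp (t*x) * gaussianPDFReal 0 v x) := by
      funext x; rw [← mul_assoc, ← Real.exp_add]; ring_nf
    rw [this]
    exact (integrable_exp_mul_gaussianPDFReal v hv t).const_mul _
  calc ∫ x in S, gaussianPDFReal 0 v x
      ≤ ∫ x in S, Real.exp (t*(x-b)) * gaussianPDFReal 0 v x := by
        refine setIntegral_mono_on (integrable_gaussianPDFReal 0 v).integrableOn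
          hint.integrableOn hS ?_
        intro x hx
        exact le_mul_of_one_le_left (gaussianPDFReal_nonneg 0 v x) (h x hx)
    _ ≤ ∫ x, Real.exp (t*(x-b)) * gaussianPDFReal 0 v x := by
        refine setIntegral_le_integral hint (ae_of_all _ fun x => ?_)
        exact mul_nonneg (Real.exp_nonneg _) (gaussianPDFReal_nonneg 0 v x)
    _ = Real.exp (-(t*b)) * ∫ x, Real.exp (t*x) * gaussianPDFReal 0 v x := by
        rw [← integral_const_mul]
        congr 1; funext x
        rw [← mul_assoc, ← Real.exp_add]; ring_nf
    _ = Real.exp (-(t*b) + (v:ℝ)*t^2/2) := by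
        rw [integral_exp_mul_gaussianPDFReal v hv t, ← Real.exp_add]

lemma gauss_tail (v : ℝ≥0) (hv : v ≠ 0) (a : ℝ) (ha : 0 ≤ a) :
    gaussianReal 0 v {x | a < |x|} ≤ ENNReal.ofReal (2 * Real.exp (-(a^2) / (2*(v:ℝ)))) := by
  have hv' : (0:ℝ) < v := lt_of_le_of_ne v.coe_nonneg (by exact_mod_cast hv.symm)
  have hsub : {x : ℝ | a < |x|} ⊆ Set.Iic (-a) ∪ Set.Ici a := by
    intro x hx
    simp only [Set.mem_setOf_eq] at hx
    rcases le_total 0 x with h | h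
    · right; rw [Set.mem_Ici]; rw [abs_of_nonneg h] at hx; exact hx.le
    · left; rw [Set.mem_Iic]; rw [abs_of_nonpos h] at hx; linarith
  have key : ∀ (t b : ℝ) (S : Set ℝ), MeasurableSet S → (∀ x ∈ S, 1 ≤ Real.exp (t*(x - b))) →
      -(t*b) + (v:ℝ)*t^2/2 = -(a^2)/(2*(v:ℝ)) →
      gaussianReal 0 v S ≤ ENNReal.ofReal (Real.exp (-(a^2)/(2*(v:ℝ)))) := by
    intro t b S hS h he
    rw [gaussianReal_apply_eq_integral 0 hv S]
    refine ENNReal.ofReal_le_ofReal ?_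
    rw [← he]
    exact chernoff_gauss v hv t b S hS h
  have h1 : gaussianReal 0 v (Set.Ici a) ≤ ENNReal.ofReal (Real.exp (-(a^2)/(2*(v:ℝ)))) := by
    refine key (a/(v:ℝ)) a _ measurableSet_Ici (fun x hx => ?_) (by field_simp; ring)
    rw [← Real.exp_zero]
    apply Real.exp_le_exp.mpr
    have hxa : (0:ℝ) ≤ x - a := sub_nonneg.mpr hx
    exact mul_nonneg (div_nonneg ha hv'.le) hxa
  have h2 : gaussianReal 0 v (Set.Iic (-a)) ≤ ENNReal.ofReal (Real.exp (-(a^2)/(2*(v:ℝ)))) := by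
    refine key (-(a/(v:ℝ))) (-a) _ measurableSet_Iic (fun x hx => ?_) (by field_simp; ring)
    rw [← Real.exp_zero]
    apply Real.exp_le_exp.mpr
    have hx' : x - -a ≤ 0 := by simp only [Set.mem_Iic] at hx; linarith
    have hav : 0 ≤ (a/(v:ℝ)) := div_nonneg ha hv'.le
    nlinarith
  calc gaussianReal 0 v {x | a < |x|} ≤ gaussianReal 0 v (Set.Iic (-a) ∪ Set.Ici a) :=
        measure_mono hsub
    _ ≤ gaussianReal 0 v (Set.Iic (-a)) + gaussianReal 0 v (Set.Ici a) := measure_union_le _ _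
    _ ≤ ENNReal.ofReal (Real.exp (-(a^2)/(2*(v:ℝ)))) + ENNReal.ofReal (Real.exp (-(a^2)/(2*(v:ℝ)))) := add_le_add h2 h1
    _ = ENNReal.ofReal (2 * Real.exp (-(a^2) / (2*(v:ℝ)))) := by
        rw [← ENNReal.ofReal_add (Real.exp_nonneg _) (Real.exp_nonneg _)]; ring_nf

/-- level-`n` dyadic approximation from below -/
noncomputable def dy (x : ℝ) (n : ℕ) : ℝ := (⌊x * 2^n⌋ : ℤ) / 2^n

lemma dy_le (x : ℝ) (n : ℕ) : dy x n ≤ x := by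
  rw [dy, div_le_iff₀ (by positivity)]
  exact Int.floor_le _

lemma lt_dy_add (x : ℝ) (n : ℕ) : x < dy x n + ((2:ℝ)^n)⁻¹ := by
  rw [dy]
  have h := Int.lt_floor_add_one (x * 2^n)
  rw [div_add' _ _ _ (by positivity : ((2:ℝ)^n) ≠ 0)]
  rw [lt_div_iff₀ (by positivity : (0:ℝ) < (2:ℝ)^n)]
  calc x * 2^n < ⌊x * 2^n⌋ + 1 := h
    _ = (⌊x * 2^n⌋ : ℝ) + (2:ℝ)^n * ((2:ℝ)^n)⁻¹ := by
        rw [mul_inv_cancel₀ (by positivity : ((2:ℝ)^n) ≠ 0)]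
    _ = _ := by ring

lemma dy_tendsto (x : ℝ) : Tendsto (dy x) atTop (nhds x) := by
  have h2 : Tendsto (fun n : ℕ => ((2:ℝ)^n)⁻¹) atTop (nhds 0) := by
    simpa using tendsto_pow_atTop_nhds_zero_of_lt_one (by norm_num : (0:ℝ) ≤ 2⁻¹)
      (by norm_num : (2:ℝ)⁻¹ < 1) |>.congr (fun n => by rw [inv_pow])
  have hlow : Tendsto (fun n : ℕ => x - ((2:ℝ)^n)⁻¹) atTop (nhds x) := by
    simpa using tendsto_const_nhds.sub h2
  refine tendsto_of_tendsto_of_tendsto_of_le_of_le hlow tendsto_const_nhds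
    (fun n => ?_) (fun n => dy_le x n)
  have := lt_dy_add x n
  linarith

section chain
variable {β c : ℝ} {f : ℝ → ℝ}

/-- one dyadic refinement step -/
lemma dy_step (hβ0 : 0 < β) (hc : 0 ≤ c)
    (H : ∀ n k : ℕ, k + 1 ≤ 2^n → |f ((k+1)/2^n) - f (k/2^n)| ≤ c * ((2:ℝ)^(-β))^n)
    {x : ℝ} (hx0 : 0 ≤ x) (hx1 : x ≤ 1) (j : ℕ) :
    |f (dy x (j+1)) - f (dy x j)| ≤ c * ((2:ℝ)^(-β))^(j+1) := by
  set r : ℝ := (2:ℝ)^(-β) with hr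
  have hr0 : 0 < r := Real.rpow_pos_of_pos two_pos _
  set y := x * 2^j with hy
  set kZ := ⌊y⌋ with hkZ
  set m := ⌊x * 2^(j+1)⌋ with hm
  have hx2 : x * 2^(j+1) = 2 * y := by rw [hy]; ring
  have h1 : 2*kZ ≤ m := by
    rw [hm, Int.le_floor, hx2]
    push_cast
    have := Int.floor_le y
    linarith
  have h2 : m ≤ 2*kZ+1 := by
    have h3 : m < 2*kZ + 2 := by
      rw [hm, Int.floor_lt, hx2]
      push_cast
      have := Int.lt_floor_add_one y
      linarith
    omega
  have hk0 : 0 ≤ kZ := Int.floor_nonneg.mpr (by positivity)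
  have hmN : m ≤ 2^(j+1) := by
    rw [hm]
    have : x * 2^(j+1) ≤ ((2^(j+1) : ℤ) : ℝ) := by
      push_cast
      nlinarith [pow_pos (by norm_num : (0:ℝ) < 2) (j+1)]
    calc ⌊x * 2^(j+1)⌋ ≤ ⌊((2^(j+1) : ℤ) : ℝ)⌋ := Int.floor_le_floor this
      _ = 2^(j+1) := Int.floor_intCast _
  rcases (by omega : m = 2*kZ ∨ m = 2*kZ+1) with hcase | hcase
  · have : dy x (j+1) = dy x j := by
      rw [dy, dy, ← hm, ← hkZ, hcase]
      push_cast
      field_simp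
      ring
    rw [this, sub_self, abs_zero]
    positivity
  · set kn : ℕ := kZ.toNat with hkn
    have hknZ : (kn : ℤ) = kZ := Int.toNat_of_nonneg hk0
    have hb : (2*kn) + 1 ≤ 2^(j+1) := by
      have hNZ : ((2^(j+1) : ℕ) : ℤ) = 2^(j+1) := by push_cast; ring
      omega
    have key := H (j+1) (2*kn) hb
    have e1 : dy x (j+1) = (((2*kn : ℕ) : ℝ)+1)/2^(j+1) := by
      rw [dy, ← hm, hcase]
      push_cast [← hknZ]
      ring_nf
    have e2 : dy x j = ((2*kn : ℕ) : ℝ)/2^(j+1) := by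
      rw [dy, ← hkZ]
      push_cast [← hknZ]
      field_simp
      ring
    rw [e1, e2]
    exact key

/-- distance from the level-`n` dyadic approximation -/
lemma dy_approx (hβ0 : 0 < β) (hβ1 : β ≤ 1) (hc : 0 ≤ c) (hf : Continuous f)
    (H : ∀ n k : ℕ, k + 1 ≤ 2^n → |f ((k+1)/2^n) - f (k/2^n)| ≤ c * ((2:ℝ)^(-β))^n)
    {x : ℝ} (hx0 : 0 ≤ x) (hx1 : x ≤ 1) (n : ℕ) :
    |f x - f (dy x n)| ≤ c * ((2:ℝ)^(-β))^n * (1 - (2:ℝ)^(-β))⁻¹ := by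
  set r : ℝ := (2:ℝ)^(-β) with hr
  have hr0 : 0 < r := Real.rpow_pos_of_pos two_pos _
  have hr1 : r < 1 := Real.rpow_lt_one_of_one_lt_of_neg (by norm_num) (by linarith)
  have hgeom : ∀ m : ℕ, ∑ i ∈ Finset.range m, r^i ≤ (1-r)⁻¹ := by
    intro m
    rw [geom_sum_eq (by linarith : r ≠ 1)]
    rw [div_le_iff_of_neg (by linarith : r - 1 < 0)]
    have : 0 < r ^ m := pow_pos hr0 m
    have h1r : (0:ℝ) < 1 - r := by linarith
    have : (1-r)⁻¹ * (r - 1) = -1 := by field_simp; ring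
    rw [this]
    linarith
  have tele : ∀ m : ℕ, |f (dy x (n+m)) - f (dy x n)| ≤ c * r^(n+1) * (1-r)⁻¹ := by
    intro m
    have step : ∀ m : ℕ, |f (dy x (n+m)) - f (dy x n)| ≤ ∑ i ∈ Finset.range m, c * r^(n+i+1) := by
      intro m
      induction m with
      | zero => simp
      | succ m ih =>
        rw [Finset.sum_range_succ]
        calc |f (dy x (n+(m+1))) - f (dy x n)|
            ≤ |f (dy x (n+m+1)) - f (dy x (n+m))| + |f (dy x (n+m)) - f (dy x n)| := by
              rw [show n+(m+1) = n+m+1 from rfl]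
              exact abs_sub_le _ _ _ |>.trans_eq (by rw [add_comm]) |>.trans_eq (by ring)
          _ ≤ c * r^(n+m+1) + ∑ i ∈ Finset.range m, c * r^(n+i+1) := by
              gcongr
              exact dy_step hβ0 hc H hx0 hx1 (n+m)
          _ = ∑ i ∈ Finset.range m, c * r^(n+i+1) + c * r^(n+m+1) := by ring
    refine (step m).trans ?_
    calc ∑ i ∈ Finset.range m, c * r^(n+i+1)
        = c * r^(n+1) * ∑ i ∈ Finset.range m, r^i := by
          rw [Finset.mul_sum]
          refine Finset.sum_congr rfl (fun i _ => ?_)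
          ring
      _ ≤ c * r^(n+1) * (1-r)⁻¹ := by
          have h1r : (0:ℝ) < 1 - r := by linarith
          have : 0 ≤ c * r^(n+1) := by positivity
          exact mul_le_mul_of_nonneg_left (hgeom m) this
  have hlim : Tendsto (fun m : ℕ => |f (dy x (n+m)) - f (dy x n)|) atTop
      (nhds (|f x - f (dy x n)|)) := by
    have h1 : Tendsto (fun m : ℕ => dy x (n+m)) atTop (nhds x) := by
      simpa [add_comm, Function.comp_def] using (dy_tendsto x).comp (tendsto_add_atTop_nat n)
    have h2 : Tendsto (fun m : ℕ => f (dy x (n+m))) atTop (nhds (f x)) :=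
      (hf.tendsto x).comp h1
    exact ((h2.sub tendsto_const_nhds).abs)
  have hle : |f x - f (dy x n)| ≤ c * r^(n+1) * (1-r)⁻¹ :=
    le_of_tendsto hlim (Eventually.of_forall tele)
  refine hle.trans ?_
  have h1r : (0:ℝ) < 1 - r := by linarith
  have : r^(n+1) ≤ r^n := pow_le_pow_of_le_one hr0.le hr1.le (by omega)
  have hc' : 0 ≤ c * (1-r)⁻¹ := by positivity
  calc c * r^(n+1) * (1-r)⁻¹ = (c * (1-r)⁻¹) * r^(n+1) := by ring
    _ ≤ (c * (1-r)⁻¹) * r^n := mul_le_mul_of_nonneg_left this hc'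
    _ = c * r^n * (1-r)⁻¹ := by ring

variable {α : ℝ}

lemma pair_bound (hα0 : 0 < α) (hαβ : α ≤ β) (hβ1 : β ≤ 1) (hc : 0 ≤ c)
    (hf : Continuous f)
    (H : ∀ n k : ℕ, k + 1 ≤ 2^n → |f ((k+1)/2^n) - f (k/2^n)| ≤ c * ((2:ℝ)^(-β))^n)
    {s t : ℝ} (hs : 0 ≤ s) (hst : s < t) (ht : t ≤ 1) :
    |f t - f s| ≤ (2 + 4*(1-(2:ℝ)^(-β))⁻¹) * c * (t-s)^α := by
  have hβ0 : 0 < β := lt_of_lt_of_le hα0 hαβ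
  set r : ℝ := (2:ℝ)^(-β) with hr
  have hr0 : 0 < r := Real.rpow_pos_of_pos two_pos _
  have hr1 : r < 1 := Real.rpow_lt_one_of_one_lt_of_neg (by norm_num) (by linarith)
  have h1r : (0:ℝ) < 1 - r := by linarith
  set d : ℝ := t - s with hd
  have hd0 : 0 < d := sub_pos.mpr hst
  have hd1 : d ≤ 1 := by simp only [hd]; linarith
  -- find the level n
  have hex : ∃ m : ℕ, ((2:ℝ)^(m+1))⁻¹ < d := by
    obtain ⟨m, hm⟩ := exists_pow_lt_of_lt_one hd0 (by norm_num : (1:ℝ)/2 < 1)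
    refine ⟨m, lt_of_le_of_lt ?_ hm⟩
    rw [div_pow, one_pow, ← inv_eq_one_div]
    apply inv_anti₀ (by positivity)
    apply pow_le_pow_right₀ (by norm_num) (by omega)
  classical
  set n := Nat.find hex with hn
  have h1 : ((2:ℝ)^(n+1))⁻¹ < d := Nat.find_spec hex
  have h2 : d ≤ ((2:ℝ)^n)⁻¹ := by
    rcases Nat.eq_zero_or_pos n with h | h
    · rw [h]; simpa using hd1
    · obtain ⟨k, hk⟩ := Nat.exists_eq_succ_of_ne_zero h.ne'
      have := Nat.find_min hex (m := k) (by omega)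
      rw [hk]
      exact not_lt.mp (by simpa using this)
  -- middle step
  have hpow : (0:ℝ) < 2^n := by positivity
  set ks := ⌊s * 2^n⌋ with hks
  set kt := ⌊t * 2^n⌋ with hkt
  have hks0 : 0 ≤ ks := Int.floor_nonneg.mpr (by positivity)
  have hle : ks ≤ kt := Int.floor_le_floor (by nlinarith)
  have hlt : kt ≤ ks + 1 := by
    have hts : t * 2^n ≤ s * 2^n + 1 := by
      have : d * 2^n ≤ 1 := by
        calc d * 2^n ≤ ((2:ℝ)^n)⁻¹ * 2^n := by nlinarith
          _ = 1 := inv_mul_cancel₀ hpow.ne'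
      nlinarith
    calc kt ≤ ⌊s * 2^n + (1:ℤ)⌋ := Int.floor_le_floor (by push_cast; linarith)
      _ = ks + 1 := Int.floor_add_intCast _ _
  have hktle : kt ≤ 2^n := by
    have : t * 2^n ≤ ((2^n : ℤ) : ℝ) := by push_cast; nlinarith
    calc kt ≤ ⌊((2^n : ℤ) : ℝ)⌋ := Int.floor_le_floor this
      _ = 2^n := Int.floor_intCast _
  have middle : |f (dy t n) - f (dy s n)| ≤ c * r^n := by
    rcases (by omega : kt = ks ∨ kt = ks + 1) with h | h
    · have : dy t n = dy s n := by rw [dy, dy, ← hks, ← hkt, h]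
      rw [this, sub_self, abs_zero]; positivity
    · set kn : ℕ := ks.toNat with hkn
      have hknZ : (kn : ℤ) = ks := Int.toNat_of_nonneg hks0
      have hb : kn + 1 ≤ 2^n := by
        have hNZ : ((2^n : ℕ) : ℤ) = 2^n := by push_cast; ring
        omega
      have key := H n kn hb
      have e1 : dy t n = ((kn : ℝ)+1)/2^n := by
        rw [dy, ← hkt, h]; push_cast [← hknZ]; ring_nf
      have e2 : dy s n = (kn : ℝ)/2^n := by
        rw [dy, ← hks]; push_cast [← hknZ]; ring_nf
      rw [e1, e2]; exact key
  -- assemble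
  have ht' := dy_approx hβ0 hβ1 hc hf H (le_trans hs hst.le) ht n
  have hs' := dy_approx hβ0 hβ1 hc hf H hs (le_trans hst.le ht) n
  have total : |f t - f s| ≤ c * r^n * (1 + 2*(1-r)⁻¹) := by
    have tri : |f t - f s| ≤ |f t - f (dy t n)| + |f (dy t n) - f (dy s n)|
        + |f (dy s n) - f s| := by
      have := abs_sub_le (f t) (f (dy t n)) (f s)
      have := abs_sub_le (f (dy t n)) (f (dy s n)) (f s)
      have h3 := abs_sub_le (f t) (f (dy t n)) (f s)
      have h4 := abs_sub_le (f (dy t n)) (f (dy s n)) (f s)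
      linarith
    have hs'' : |f (dy s n) - f s| ≤ c * r^n * (1-r)⁻¹ := by
      rw [abs_sub_comm]; exact hs'
    calc |f t - f s| ≤ (c * r^n * (1-r)⁻¹) + (c * r^n) + (c * r^n * (1-r)⁻¹) := by
          refine tri.trans ?_; gcongr <;> assumption
      _ = c * r^n * (1 + 2*(1-r)⁻¹) := by ring
  -- r^n ≤ 2 * d^α
  have hrn : r^n ≤ 2 * d^α := by
    have e : r^n = (((2:ℝ)^n)⁻¹)^β := by
      rw [hr, ← Real.rpow_natCast ((2:ℝ)^(-β)) n, ← Real.rpow_mul (by norm_num : (0:ℝ) ≤ 2)]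
      rw [show ((2:ℝ)^n)⁻¹ = (2:ℝ)^(-(n:ℝ)) by
        rw [← Real.rpow_natCast (2:ℝ) n, Real.rpow_neg (by norm_num : (0:ℝ) ≤ 2)]]
      rw [← Real.rpow_mul (by norm_num : (0:ℝ) ≤ 2)]
      ring_nf
    have hw : ((2:ℝ)^n)⁻¹ < 2 * d := by
      have : ((2:ℝ)^n)⁻¹ = 2 * ((2:ℝ)^(n+1))⁻¹ := by
        rw [pow_succ]
        field_simp
      rw [this]; linarith
    calc r^n = (((2:ℝ)^n)⁻¹)^β := e
      _ ≤ (2*d)^β := Real.rpow_le_rpow (by positivity) hw.le hβ0.le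
      _ = 2^β * d^β := Real.mul_rpow (by norm_num) hd0.le
      _ ≤ 2 * d^α := by
          have h2b : (2:ℝ)^β ≤ 2 := by
            calc (2:ℝ)^β ≤ (2:ℝ)^(1:ℝ) :=
                Real.rpow_le_rpow_of_exponent_le one_le_two hβ1
              _ = 2 := Real.rpow_one 2
          have hdb : d^β ≤ d^α := Real.rpow_le_rpow_of_exponent_ge hd0 hd1 hαβ
          have : (0:ℝ) ≤ d^β := (Real.rpow_pos_of_pos hd0 β).le
          have : (0:ℝ) ≤ d^α := (Real.rpow_pos_of_pos hd0 α).le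
          nlinarith [Real.rpow_pos_of_pos hd0 β]
  calc |f t - f s| ≤ c * r^n * (1 + 2*(1-r)⁻¹) := total
    _ ≤ c * (2 * d^α) * (1 + 2*(1-r)⁻¹) := by
        have hfac : (0:ℝ) ≤ 1 + 2*(1-r)⁻¹ := by positivity
        have := mul_le_mul_of_nonneg_left hrn hc
        nlinarith
    _ = (2 + 4*(1-r)⁻¹) * c * d^α := by ring

lemma holder_le (hα0 : 0 < α) (hαβ : α ≤ β) (hβ1 : β ≤ 1) (hc : 0 ≤ c)
    (hf : Continuous f) (hf0 : f 0 = 0)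
    (H : ∀ n k : ℕ, k + 1 ≤ 2^n → |f ((k+1)/2^n) - f (k/2^n)| ≤ c * ((2:ℝ)^(-β))^n) :
    holderNorm α 0 1 f ≤ (4 + 8*(1-(2:ℝ)^(-β))⁻¹) * c := by
  have hβ0 : 0 < β := lt_of_lt_of_le hα0 hαβ
  set r : ℝ := (2:ℝ)^(-β) with hr
  have hr0 : 0 < r := Real.rpow_pos_of_pos two_pos _
  have hr1 : r < 1 := Real.rpow_lt_one_of_one_lt_of_neg (by norm_num) (by linarith)
  have h1r : (0:ℝ) < 1 - r := by linarith
  set Cp : ℝ := 2 + 4*(1-r)⁻¹ with hCp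
  have hCp0 : 0 ≤ Cp := by positivity
  have pair : ∀ s t : ℝ, 0 ≤ s → s < t → t ≤ 1 → |f t - f s| ≤ Cp * c * (t-s)^α :=
    fun s t hs hst ht => pair_bound hα0 hαβ hβ1 hc hf H hs hst ht
  rw [holderNorm]
  have sup1 : (⨆ q : {q : ℝ × ℝ // 0 ≤ q.1 ∧ q.1 < q.2 ∧ q.2 ≤ 1},
      |f (q : ℝ × ℝ).2 - f (q : ℝ × ℝ).1| / ((q : ℝ × ℝ).2 - (q : ℝ × ℝ).1) ^ α)
      ≤ Cp * c := by
    refine Real.iSup_le (fun q => ?_) (by positivity)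
    obtain ⟨⟨s, t⟩, hq0, hq1, hq2⟩ := q
    simp only
    rw [div_le_iff₀ (Real.rpow_pos_of_pos (sub_pos.mpr hq1) α)]
    calc |f t - f s| ≤ Cp * c * (t-s)^α := pair s t hq0 hq1 hq2
      _ = Cp * c * (t-s)^α := rfl
  have sup2 : (⨆ t : Set.Icc (0:ℝ) 1, |f (t : ℝ)|) ≤ Cp * c := by
    refine Real.iSup_le (fun t => ?_) (by positivity)
    obtain ⟨t, ht0, ht1⟩ := t
    simp only
    rcases eq_or_lt_of_le ht0 with h | h
    · rw [← h, hf0, abs_zero]; positivity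
    · have := pair 0 t le_rfl h ht1
      rw [hf0, sub_zero, sub_zero] at this
      refine this.trans ?_
      have hta : t^α ≤ 1 := Real.rpow_le_one ht0 ht1 hα0.le
      exact mul_le_of_le_one_right (by positivity) hta
  calc _ ≤ Cp * c + Cp * c := add_le_add sup1 sup2
    _ = (4 + 8*(1-r)⁻¹) * c := by rw [hCp]; ring
end chain


set_option maxHeartbeats 1000000 in
/-- Gaussian concentration for the Hölder norm of Brownian motion.
For `α ∈ (0,1/2)` there are positive constants `k₁, k₂` depending only on `α` such that
for any standard Brownian motion `W`, `P(‖W‖_{α;[0,1]} ≥ u) ≤ k₁ exp(-k₂ u²)` for all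
`u ≥ 0`. -/
theorem stmt12 (α : ℝ) (hα0 : 0 < α) (hα1 : α < 1/2) :
    ∃ k₁ k₂ : ℝ, 0 < k₁ ∧ 0 < k₂ ∧
      ∀ (Ω : Type) (_ : MeasurableSpace Ω) (μ : Measure Ω), IsProbabilityMeasure μ →
      ∀ W : ℝ → Ω → ℝ, IsBrownianMotion μ W →
      ∀ u : ℝ, 0 ≤ u →
        (μ {ω | u ≤ holderNorm α 0 1 (fun t => W t ω)}).toReal ≤
          k₁ * Real.exp (-k₂ * u ^ 2) := by
  set β : ℝ := α/2 + 1/4 with hβ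
  have hαβ : α ≤ β := by rw [hβ]; linarith
  have hβ1 : β ≤ 1 := by rw [hβ]; linarith
  have hβ0 : 0 < β := lt_of_lt_of_le hα0 hαβ
  set r : ℝ := (2:ℝ)^(-β) with hr
  have hr0 : 0 < r := Real.rpow_pos_of_pos two_pos _
  have hr1 : r < 1 := Real.rpow_lt_one_of_one_lt_of_neg (by norm_num) (by linarith)
  have h1r : (0:ℝ) < 1 - r := by linarith
  set C : ℝ := 4 + 8*(1-r)⁻¹ with hC
  have hC0 : 0 < C := by rw [hC]; positivity
  set γ : ℝ := 1 - 2*β with hγ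
  have hγ0 : 0 < γ := by rw [hγ, hβ]; linarith
  clear_value β r C γ
  refine ⟨4 + Real.exp (2/γ), 1/(8*C^2), by positivity,
    one_div_pos.mpr (by nlinarith [hC0]), ?_⟩
  intro Ω mΩ μ hμ W hW u hu
  obtain ⟨hWc, hW0, hWm, hWd, _⟩ := hW
  set c : ℝ := u/(2*C) with hc
  have hc0 : 0 ≤ c := by rw [hc]; positivity
  clear_value c
  have hk2u : 1/(8*C^2) * u^2 = c^2/2 := by
    have h1 : c^2 = u^2/(4*C^2) := by
      rw [hc, div_pow]
      congr 1
      ring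
    rw [h1, div_div, one_div, inv_mul_eq_div]
    congr 1
    ring
  by_cases hbig : 4/γ ≤ c^2
  swap
  · -- small u : use that μ is a probability measure
    have h1 : (μ {ω | u ≤ holderNorm α 0 1 (fun t => W t ω)}).toReal ≤ 1 := by
      have := prob_le_one (μ := μ) (s := {ω | u ≤ holderNorm α 0 1 (fun t => W t ω)})
      simpa using ENNReal.toReal_mono ENNReal.one_ne_top this
    refine h1.trans ?_
    have hlt : c^2/2 ≤ 2/γ := by
      have h2 : c^2 < 4/γ := not_le.mp hbig
      rw [lt_div_iff₀ hγ0] at h2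
      rw [div_le_div_iff₀ two_pos hγ0]
      nlinarith
    calc (1:ℝ) = Real.exp (2/γ) * Real.exp (-(2/γ)) := by
          rw [← Real.exp_add]; simp
      _ ≤ (4 + Real.exp (2/γ)) * Real.exp (-(1/(8*C^2)) * u^2) := by
          refine mul_le_mul (by linarith [Real.exp_pos (2/γ)]) ?_ (Real.exp_pos _).le
            (by positivity)
          apply Real.exp_le_exp.mpr
          rw [neg_mul, hk2u]
          linarith
  · -- main branch
    have hc2 : 0 < c := by
      rcases eq_or_lt_of_le hc0 with h | h
      · exfalso
        rw [← h] at hbig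
        rw [div_le_iff₀ hγ0] at hbig
        nlinarith
      · exact h
    have hu0 : 0 < u := by
      have hh : u = c * (2*C) := by rw [hc]; field_simp
      rw [hh]; exact mul_pos hc2 (by linarith)
    have hcγ : 4 ≤ c^2 * γ := by rw [div_le_iff₀ hγ0] at hbig; linarith
    set B : ℕ → ℕ → Set Ω := fun n k =>
      if k+1 ≤ 2^n then {ω | c * r^n < |W (((k:ℝ)+1)/2^n) ω - W ((k:ℝ)/2^n) ω|} else ∅
      with hB
    -- inclusion
    have hincl : {ω | u ≤ holderNorm α 0 1 (fun t => W t ω)} ⊆ ⋃ n, ⋃ k, B n k := by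
      intro ω hω
      by_contra hnot
      simp only [Set.mem_iUnion, not_exists] at hnot
      have key : ∀ n k : ℕ, k+1 ≤ 2^n →
          |W (((k:ℝ)+1)/2^n) ω - W ((k:ℝ)/2^n) ω| ≤ c * r^n := by
        intro n k hk
        have h := hnot n k
        rw [hB] at h
        simp only [if_pos hk, Set.mem_setOf_eq] at h
        exact not_lt.mp h
      rw [hr] at key
      have hbound := holder_le hα0 hαβ hβ1 hc0 (hWc ω) (hW0 ω) key
      rw [← hr] at hbound
      have hCc : C * c = u/2 := by
        rw [hc]
        field_simp
      rw [Set.mem_setOf_eq] at hω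
      have : holderNorm α 0 1 (fun t => W t ω) ≤ u/2 := by
        calc holderNorm α 0 1 (fun t => W t ω) ≤ (4 + 8*(1-r)⁻¹) * c := hbound
          _ = C * c := by rw [hC]
          _ = u/2 := hCc
      linarith
    -- per-(n,k) bound
    have hlog2 : (0:ℝ) < Real.log 2 := Real.log_pos (by norm_num)
    have hquarter : Real.exp (-(2*Real.log 2)) = 1/4 := by
      rw [Real.exp_neg, show (2:ℝ)*Real.log 2 = Real.log 2 + Real.log 2 by ring,
        Real.exp_add, Real.exp_log two_pos]
      norm_num
    have hterm : ∀ n k : ℕ, μ (B n k) ≤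
        ENNReal.ofReal (2 * Real.exp (-(c^2/2)) * (1/4 : ℝ)^n) := by
      intro n k
      by_cases hk : k+1 ≤ 2^n
      · have hBeq : B n k
            = {ω | c * r^n < |W (((k:ℝ)+1)/2^n) ω - W ((k:ℝ)/2^n) ω|} := by
          rw [hB]; simp only [if_pos hk]
        rw [hBeq]
        set t0 : ℝ := (k:ℝ)/2^n with ht0def
        set t1 : ℝ := ((k:ℝ)+1)/2^n with ht1def
        have ht00 : 0 ≤ t0 := by positivity
        have ht01 : t0 ≤ t1 := by
          rw [ht0def, ht1def]
          gcongr
          linarith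
        have hmeas : Measurable (fun ω => W t1 ω - W t0 ω) := (hWm t1).sub (hWm t0)
        have hset : MeasurableSet {x : ℝ | c * r^n < |x|} :=
          measurableSet_lt measurable_const measurable_id.abs
        have hpre : {ω | c * r^n < |W t1 ω - W t0 ω|}
            = (fun ω => W t1 ω - W t0 ω) ⁻¹' {x | c * r^n < |x|} := rfl
        rw [hpre, ← Measure.map_apply hmeas hset, hWd t0 t1 ht00 ht01]
        have hdiff : t1 - t0 = ((2:ℝ)^n)⁻¹ := by
          rw [ht0def, ht1def]
          field_simp
          ring
        have hvpos : (0:ℝ) < t1 - t0 := by rw [hdiff]; positivity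
        have hvne : Real.toNNReal (t1 - t0) ≠ 0 := by
          simp only [ne_eq, Real.toNNReal_eq_zero, not_le]
          exact hvpos
        have hvcoe : ((Real.toNNReal (t1 - t0)):ℝ) = ((2:ℝ)^n)⁻¹ := by
          rw [Real.coe_toNNReal _ hvpos.le, hdiff]
        refine (gauss_tail _ hvne (c * r^n)
          (mul_nonneg hc0 (pow_nonneg hr0.le n))).trans ?_
        apply ENNReal.ofReal_le_ofReal
        rw [hvcoe]
        -- exponent computation
        have hexpid : (r^n)^2 * (2:ℝ)^n = Real.exp ((n:ℝ) * (γ * Real.log 2)) := by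
          have e1 : r^n = Real.exp ((n:ℝ) * (Real.log 2 * (-β))) := by
            rw [hr, Real.rpow_def_of_pos two_pos, Real.exp_nat_mul]
          have e2 : (2:ℝ)^n = Real.exp ((n:ℝ) * Real.log 2) := by
            rw [Real.exp_nat_mul, Real.exp_log two_pos]
          rw [e1, e2, pow_two, ← Real.exp_add, ← Real.exp_add]
          congr 1
          rw [hγ]
          ring
        have hEeq : (c*r^n)^2 / (2*((2:ℝ)^n)⁻¹)
            = (c^2/2) * ((r^n)^2 * (2:ℝ)^n) := by
          have h2n : ((2:ℝ)^n) ≠ 0 := by positivity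
          field_simp
        have hX0 : (0:ℝ) ≤ (n:ℝ) * (γ * Real.log 2) :=
          mul_nonneg (Nat.cast_nonneg n) (mul_nonneg hγ0.le hlog2.le)
        have hEge : c^2/2 + (n:ℝ)*(2*Real.log 2) ≤ (c*r^n)^2 / (2*((2:ℝ)^n)⁻¹) := by
          rw [hEeq, hexpid]
          have hexp := Real.add_one_le_exp ((n:ℝ) * (γ * Real.log 2))
          have hstep : (n:ℝ)*(2*Real.log 2) ≤ (c^2/2) * ((n:ℝ) * (γ * Real.log 2)) := by
            have hn0 : (0:ℝ) ≤ (n:ℝ) := Nat.cast_nonneg n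
            have hkey : 0 ≤ (n:ℝ) * Real.log 2 * (c^2*γ - 4) :=
              mul_nonneg (mul_nonneg hn0 hlog2.le) (by linarith)
            nlinarith [hkey]
          nlinarith
        calc 2 * Real.exp (-(c*r^n)^2 / (2*((2:ℝ)^n)⁻¹))
            ≤ 2 * Real.exp (-(c^2/2 + (n:ℝ)*(2*Real.log 2))) := by
              have : -(c*r^n)^2 / (2*((2:ℝ)^n)⁻¹)
                  = -((c*r^n)^2 / (2*((2:ℝ)^n)⁻¹)) := by ring
              rw [this]
              gcongr 2 * ?_
              exact Real.exp_le_exp.mpr (by linarith)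
          _ = 2 * Real.exp (-(c^2/2)) * (1/4:ℝ)^n := by
              rw [neg_add, Real.exp_add, show -((n:ℝ)*(2*Real.log 2))
                = (n:ℝ) * (-(2*Real.log 2)) by ring, Real.exp_nat_mul, hquarter]
              ring
      · have hBeq : B n k = ∅ := by rw [hB]; simp only [if_neg hk]
        rw [hBeq, measure_empty]
        exact zero_le
    -- row sums
    have hhalf : ENNReal.ofReal ((1:ℝ)/2) = 2⁻¹ := by
      rw [one_div, ENNReal.ofReal_inv_of_pos two_pos]
      norm_num
    have hrow : ∀ n : ℕ, ∑' k : ℕ, μ (B n k) ≤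
        ENNReal.ofReal (2 * Real.exp (-(c^2/2))) * (ENNReal.ofReal ((1:ℝ)/2))^n := by
      intro n
      have hz : ∀ k ∉ Finset.range (2^n), μ (B n k) = 0 := by
        intro k hk
        simp only [Finset.mem_range, not_lt] at hk
        have hBeq : B n k = ∅ := by
          rw [hB]; simp only [if_neg (by omega : ¬ (k+1 ≤ 2^n))]
        rw [hBeq]
        exact measure_empty
      rw [tsum_eq_sum hz]
      have hpow4 : (2:ℝ)^n * ((1:ℝ)/4)^n = ((1:ℝ)/2)^n := by
        rw [← mul_pow]
        norm_num
      calc ∑ k ∈ Finset.range (2^n), μ (B n k)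
          ≤ ∑ _k ∈ Finset.range (2^n),
            ENNReal.ofReal (2 * Real.exp (-(c^2/2)) * (1/4 : ℝ)^n) :=
            Finset.sum_le_sum (fun k _ => hterm n k)
        _ = (2^n : ℕ) • ENNReal.ofReal (2 * Real.exp (-(c^2/2)) * (1/4 : ℝ)^n) := by
            rw [Finset.sum_const, Finset.card_range]
        _ = ENNReal.ofReal ((2:ℝ)^n) * ENNReal.ofReal (2 * Real.exp (-(c^2/2)) * (1/4 : ℝ)^n) := by
            rw [nsmul_eq_mul]
            congr 1
            rw [ENNReal.ofReal_pow (by norm_num : (0:ℝ) ≤ 2)]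
            push_cast
            norm_num
        _ = ENNReal.ofReal ((2:ℝ)^n * (2 * Real.exp (-(c^2/2)) * (1/4 : ℝ)^n)) := by
            rw [← ENNReal.ofReal_mul (by positivity)]
        _ = ENNReal.ofReal (2 * Real.exp (-(c^2/2)) * ((1:ℝ)/2)^n) := by
            rw [← hpow4]
            ring_nf
        _ = ENNReal.ofReal (2 * Real.exp (-(c^2/2))) * (ENNReal.ofReal ((1:ℝ)/2))^n := by
            rw [← ENNReal.ofReal_pow (by norm_num : (0:ℝ) ≤ (1:ℝ)/2),
              ← ENNReal.ofReal_mul (by positivity)]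
    -- total
    have hmain : μ {ω | u ≤ holderNorm α 0 1 (fun t => W t ω)}
        ≤ ENNReal.ofReal (4 * Real.exp (-(c^2/2))) := by
      calc μ {ω | u ≤ holderNorm α 0 1 (fun t => W t ω)}
          ≤ μ (⋃ n, ⋃ k, B n k) := measure_mono hincl
        _ ≤ ∑' n : ℕ, μ (⋃ k, B n k) := measure_iUnion_le _
        _ ≤ ∑' n : ℕ, ∑' k : ℕ, μ (B n k) :=
            ENNReal.tsum_le_tsum (fun n => measure_iUnion_le _)
        _ ≤ ∑' n : ℕ, ENNReal.ofReal (2 * Real.exp (-(c^2/2)))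
              * (ENNReal.ofReal ((1:ℝ)/2))^n := ENNReal.tsum_le_tsum hrow
        _ = ENNReal.ofReal (2 * Real.exp (-(c^2/2)))
              * ∑' n : ℕ, (ENNReal.ofReal ((1:ℝ)/2))^n := ENNReal.tsum_mul_left
        _ = ENNReal.ofReal (2 * Real.exp (-(c^2/2))) * 2 := by
            rw [hhalf, ENNReal.tsum_geometric, ENNReal.one_sub_inv_two, inv_inv]
        _ = ENNReal.ofReal (4 * Real.exp (-(c^2/2))) := by
            rw [show (2:ℝ≥0∞) = ENNReal.ofReal 2 by simp,
              ← ENNReal.ofReal_mul (by positivity)]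
            ring_nf
    calc (μ {ω | u ≤ holderNorm α 0 1 (fun t => W t ω)}).toReal
        ≤ (ENNReal.ofReal (4 * Real.exp (-(c^2/2)))).toReal :=
          ENNReal.toReal_mono ENNReal.ofReal_ne_top hmain
      _ = 4 * Real.exp (-(c^2/2)) := ENNReal.toReal_ofReal (by positivity)
      _ = 4 * Real.exp (-(1/(8*C^2)) * u^2) := by rw [neg_mul, hk2u]
      _ ≤ (4 + Real.exp (2/γ)) * Real.exp (-(1/(8*C^2)) * u^2) := by
          have := Real.exp_pos (2/γ)
          have := Real.exp_nonneg (-(1/(8*C^2)) * u^2)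
          nlinarith
end
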